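/- Let u : ℝ × ℝ^m → ℝ be smooth, everywhere positive, ℤ^m-periodic in the spatial variable, with ∂_t u = Δ_x u, and set f = −ln u. Define the entropy N(t) = ∫_{[0,1]^m} u(t,x)·ln u(t,x) dx and the entropy energy E(t) = ∫_{[0,1]^m} |∇f(t,x)|²·u(t,x) dx. Then N is differentiable and N'(t) = −E(t) for every t. -/

import Mathlib

open MeasureTheory
open scoped RealInnerProductSpace

noncomputable section

abbrev E (m : ℕ) := EuclideanSpace ℝ (Fin m)

/-- The standard orthonormal basis of `ℝ^m`. -/
def eE (m : ℕ) (a : Fin m) : E m := EuclideanSpace.single a 1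

/-- Second Fréchet derivative as a bilinear form. -/
def D2E (m : ℕ) (g : E m → ℝ) (x X Y : E m) : ℝ := iteratedFDeriv ℝ 2 g x ![X, Y]

/-- The Laplacian `Δg(x) = Σ_a D²g(x)[e_a, e_a]`. -/
def lapE (m : ℕ) (g : E m → ℝ) (x : E m) : ℝ := ∑ a, D2E m g x (eE m a) (eE m a)

/-- The unit cube `[0,1]^m`. -/
def cube (m : ℕ) : Set (E m) := {x | ∀ i, x i ∈ Set.Icc (0 : ℝ) 1}

/-- The vector of `ℤ^m ⊂ ℝ^m` with integer coordinates `k`. -/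
def latt (m : ℕ) (k : Fin m → ℤ) : E m := WithLp.toLp 2 (fun i => (k i : ℝ))



lemma cube_eq (m : ℕ) : cube m = ⇑(EuclideanSpace.equiv (Fin m) ℝ) ⁻¹' (Set.Icc 0 1) := by
  ext x
  simp [cube, Set.mem_Icc, Pi.le_def, forall_and, EuclideanSpace.equiv]

lemma cube_eq' (m : ℕ) : cube m = ⇑(MeasurableEquiv.toLp 2 (Fin m → ℝ)).symm ⁻¹' (Set.Icc 0 1) := by
  ext x
  simp [cube, Set.mem_Icc, Pi.le_def, forall_and, MeasurableEquiv.coe_toLp_symm]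

lemma isCompact_cube (m : ℕ) : IsCompact (cube m) := by
  rw [cube_eq]
  exact (EuclideanSpace.equiv (Fin m) ℝ).toHomeomorph.isCompact_preimage.2 isCompact_Icc

lemma measurableSet_cube (m : ℕ) : MeasurableSet (cube m) :=
  (isCompact_cube m).isClosed.measurableSet

lemma integral_cube (m : ℕ) (g : E m → ℝ) :
    ∫ x in cube m, g x = ∫ y in Set.Icc (0 : Fin m → ℝ) 1, g ((EuclideanSpace.equiv (Fin m) ℝ).symm y) := by
  rw [← (EuclideanSpace.volume_preserving_symm_measurableEquiv_toLp (Fin m)).setIntegral_preimage_emb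
    (MeasurableEquiv.toLp 2 (Fin m → ℝ)).symm.measurableEmbedding
    (fun y => g ((EuclideanSpace.equiv (Fin m) ℝ).symm y)) (Set.Icc 0 1)]
  rw [← cube_eq']
  rfl

section
variable {m : ℕ} {u : ℝ → E m → ℝ}

lemma contDiff_sect (hu : ContDiff ℝ (⊤:ℕ∞) (Function.uncurry u)) (t : ℝ) :
    ContDiff ℝ (⊤:ℕ∞) (u t) :=
  hu.comp (contDiff_const.prodMk contDiff_id)

def D1 (u : ℝ → E m → ℝ) (t : ℝ) (x : E m) : ℝ :=
  fderiv ℝ (Function.uncurry u) (t, x) (1, 0)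

lemma hasDerivAt_sect (hu : ContDiff ℝ (⊤:ℕ∞) (Function.uncurry u)) (t : ℝ) (x : E m) :
    HasDerivAt (fun s => u s x) (D1 u t x) t := by
  have h := (hu.differentiable (by simp) (t, x)).hasFDerivAt
  have h2 : HasDerivAt (fun s : ℝ => (s, x)) ((1:ℝ), (0:E m)) t :=
    (hasDerivAt_id t).prodMk (hasDerivAt_const t x)
  exact h.comp_hasDerivAt t h2

lemma continuous_D1 (hu : ContDiff ℝ (⊤:ℕ∞) (Function.uncurry u)) :
    Continuous (fun p : ℝ × E m => D1 u p.1 p.2) := by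
  exact (hu.continuous_fderiv (by simp)).clm_apply continuous_const

lemma fderiv_add_period (g : E m → ℝ) (hg : Differentiable ℝ g) (v : E m)
    (hp : ∀ x, g (x + v) = g x) (x : E m) : fderiv ℝ g (x + v) = fderiv ℝ g x := by
  have hT : HasFDerivAt (fun y : E m => y + v) (ContinuousLinearMap.id ℝ (E m)) x :=
    (hasFDerivAt_id x).add_const v
  have h := ((hg (x + v)).hasFDerivAt.comp x hT)
  rw [show (g ∘ fun y => y + v) = g from funext hp] at h
  rw [h.fderiv]
  ext w; simp

lemma fderiv_eq_inner_gradient (g : E m → ℝ) (x w : E m) :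
    fderiv ℝ g x w = ⟪gradient g x, w⟫ := by
  rw [show gradient g x = (InnerProductSpace.toDual ℝ (E m)).symm (fderiv ℝ g x) from rfl]
  rw [InnerProductSpace.toDual_symm_apply]

lemma sq_norm_gradient (g : E m → ℝ) (x : E m) :
    ‖gradient g x‖ ^ 2 = ∑ i, (fderiv ℝ g x (eE m i)) ^ 2 := by
  have h : ∀ i, fderiv ℝ g x (eE m i) = gradient g x i := by
    intro i
    rw [fderiv_eq_inner_gradient, eE, EuclideanSpace.inner_single_right]
    simp
  simp_rw [h]
  rw [← real_inner_self_eq_norm_sq, PiLp.inner_apply]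
  simp [sq]

lemma gradient_neg_log (g : E m → ℝ) (hg : Differentiable ℝ g) (x : E m) (hx : g x ≠ 0) :
    gradient (fun y => -Real.log (g y)) x = -(g x)⁻¹ • gradient g x := by
  have h1 : HasFDerivAt (fun y => Real.log (g y)) ((g x)⁻¹ • fderiv ℝ g x) x :=
    (Real.hasDerivAt_log hx).comp_hasFDerivAt x (hg x).hasFDerivAt
  have h2 : HasFDerivAt (fun y => -Real.log (g y)) (-((g x)⁻¹ • fderiv ℝ g x)) x := h1.neg
  show (InnerProductSpace.toDual ℝ (E m)).symm _ = _
  rw [h2.fderiv]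
  simp [_root_.map_smul, gradient]

lemma lapE_eq (g : E m → ℝ) (hg : ContDiff ℝ (⊤:ℕ∞) g) (x : E m) :
    lapE m g x = ∑ i, fderiv ℝ (fun y => fderiv ℝ g y (eE m i)) x (eE m i) := by
  unfold lapE D2E
  refine Finset.sum_congr rfl fun i _ => ?_
  rw [iteratedFDeriv_two_apply]
  have hD : DifferentiableAt ℝ (fderiv ℝ g) x :=
    ((hg.fderiv_right (m := (⊤:ℕ∞)) (mod_cast le_top)).differentiable (by simp)) x
  have h := hD.hasFDerivAt.clm_apply (hasFDerivAt_const (eE m i) x)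
  rw [h.fderiv]
  simp

end

lemma face_shift (n : ℕ) (i : Fin (n+1)) (x : Fin n → ℝ) :
    (EuclideanSpace.equiv (Fin (n+1)) ℝ).symm (i.insertNth (1:ℝ) x) =
    (EuclideanSpace.equiv (Fin (n+1)) ℝ).symm (i.insertNth (0:ℝ) x)
      + latt (n+1) (Pi.single i 1) := by
  apply PiLp.ext
  intro j
  rcases eq_or_ne j i with rfl | hj
  · simp [latt, EuclideanSpace.equiv, Fin.insertNth_apply_same]
  · rcases Fin.exists_succAbove_eq hj with ⟨j', rfl⟩
    simp [latt, EuclideanSpace.equiv, Fin.insertNth_apply_succAbove,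
      Pi.single_eq_of_ne hj]

lemma divergence_integral_zero (n : ℕ) (V : Fin (n+1) → E (n+1) → ℝ)
    (hV : ∀ i, ContDiff ℝ (⊤:ℕ∞) (V i))
    (hVper : ∀ i x k, V i (x + latt (n+1) k) = V i x) :
    ∫ x in cube (n+1), ∑ i, fderiv ℝ (V i) x (eE (n+1) i) = 0 := by
  have hVd : ∀ i, Differentiable ℝ (V i) := fun i => (hV i).differentiable (by simp)
  set c : (Fin (n+1) → ℝ) ≃L[ℝ] E (n+1) := (EuclideanSpace.equiv (Fin (n+1)) ℝ).symm with hc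
  set cL : (Fin (n+1) → ℝ) →L[ℝ] E (n+1) := c.toContinuousLinearMap with hcLdef
  have hcL : ∀ i : Fin (n+1), cL (Pi.single i 1) = eE (n+1) i := fun i => rfl
  set F : (Fin (n+1) → ℝ) → (Fin (n+1) → ℝ) := fun y i => V i (c y) with hF
  set F' : (Fin (n+1) → ℝ) → (Fin (n+1) → ℝ) →L[ℝ] (Fin (n+1) → ℝ) :=
    fun y => ContinuousLinearMap.pi (fun i => (fderiv ℝ (V i) (c y)).comp cL) with hF'
  have hFd : ∀ y, HasFDerivAt F (F' y) y := by
    intro y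
    apply hasFDerivAt_pi'.2
    intro i
    have h := ((hVd i (c y)).hasFDerivAt.comp y c.hasFDerivAt)
    exact h
  have hdiv : ∀ y, (∑ i, F' y (Pi.single i 1) i) = ∑ i, fderiv ℝ (V i) (c y) (eE (n+1) i) := by
    intro y
    refine Finset.sum_congr rfl fun i _ => ?_
    simp [F', ContinuousLinearMap.pi_apply, hcL]
  have hVc : Continuous fun y => ∑ i, fderiv ℝ (V i) (c y) (eE (n+1) i) := by
    apply continuous_finset_sum
    intro i _
    exact ((((hV i).fderiv_right (m := (⊤:ℕ∞)) (mod_cast le_top)).continuous.comp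
      c.continuous).clm_apply continuous_const)
  have key := MeasureTheory.integral_divergence_of_hasFDerivAt_off_countable
    (a := (0 : Fin (n+1) → ℝ)) (b := (1 : Fin (n+1) → ℝ)) (fun i => zero_le_one)
    F F' ∅ Set.countable_empty
    (Continuous.continuousOn (continuous_pi fun i => ((hV i).continuous.comp c.continuous)))
    (fun x _ => hFd x)
    (by
      apply ContinuousOn.integrableOn_compact isCompact_Icc
      exact (hVc.congr (fun y => (hdiv y).symm)).continuousOn)
  rw [integral_cube]
  calc ∫ y in Set.Icc (0:Fin (n+1) → ℝ) 1, ∑ i, fderiv ℝ (V i) (c y) (eE (n+1) i)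
      = ∫ y in Set.Icc (0:Fin (n+1) → ℝ) 1, ∑ i, F' y (Pi.single i 1) i := by
        refine setIntegral_congr_fun measurableSet_Icc fun y _ => (hdiv y).symm
    _ = 0 := by
        rw [key]
        apply Finset.sum_eq_zero
        intro i _
        have : ∀ x : Fin n → ℝ, F (i.insertNth ((1:Fin (n+1) → ℝ) i) x) i
            = F (i.insertNth ((0:Fin (n+1) → ℝ) i) x) i := by
          intro x
          show V i (c (i.insertNth (1:ℝ) x)) = V i (c (i.insertNth (0:ℝ) x))
          rw [show c (i.insertNth (1:ℝ) x) = c (i.insertNth (0:ℝ) x) + latt (n+1) (Pi.single i 1)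
            from face_shift n i x]
          exact hVper i _ _
        rw [sub_eq_zero]
        exact setIntegral_congr_fun measurableSet_Icc fun x _ => this x

lemma div_pointwise (m : ℕ) (g : E m → ℝ) (hg : ContDiff ℝ (⊤:ℕ∞) g)
    (hgpos : ∀ x, 0 < g x) (x : E m) :
    ∑ i, fderiv ℝ (fun y => (Real.log (g y) + 1) * fderiv ℝ g y (eE m i)) x (eE m i)
      = ‖gradient g x‖^2 / g x + (Real.log (g x) + 1) * lapE m g x := by
  have hgd : Differentiable ℝ g := hg.differentiable (by simp)
  have hD : Differentiable ℝ (fderiv ℝ g) :=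
    (hg.fderiv_right (m := (⊤:ℕ∞)) (mod_cast le_top)).differentiable (by simp)
  have hA : HasFDerivAt (fun y => Real.log (g y) + 1) ((g x)⁻¹ • fderiv ℝ g x) x :=
    ((Real.hasDerivAt_log (hgpos x).ne').comp_hasFDerivAt x (hgd x).hasFDerivAt).add_const 1
  have hstep : ∀ i, fderiv ℝ (fun y => (Real.log (g y) + 1) * fderiv ℝ g y (eE m i)) x (eE m i)
      = (g x)⁻¹ * (fderiv ℝ g x (eE m i)) * (fderiv ℝ g x (eE m i))
        + (Real.log (g x) + 1) * (fderiv ℝ (fderiv ℝ g) x (eE m i) (eE m i)) := by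
    intro i
    have hB : HasFDerivAt (fun y => fderiv ℝ g y (eE m i))
        ((fderiv ℝ (fderiv ℝ g) x).flip (eE m i)) x := by
      have h := (hD x).hasFDerivAt.clm_apply (hasFDerivAt_const (eE m i) x)
      refine h.congr_fderiv ?_
      ext w
      simp
    have hfd : fderiv ℝ (fun y => (Real.log (g y) + 1) * fderiv ℝ g y (eE m i)) x = _ :=
      (hA.mul hB).fderiv
    rw [hfd]
    simp only [ContinuousLinearMap.add_apply, ContinuousLinearMap.smul_apply,
      ContinuousLinearMap.flip_apply, smul_eq_mul]
    ring
  rw [Finset.sum_congr rfl (fun i _ => hstep i), Finset.sum_add_distrib]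
  congr 1
  · rw [sq_norm_gradient, Finset.sum_div]
    refine Finset.sum_congr rfl fun i _ => ?_
    rw [sq, div_eq_inv_mul]
    ring
  · rw [← Finset.mul_sum, lapE_eq g hg]
    congr 1
    refine Finset.sum_congr rfl fun i _ => ?_
    have h := (hD x).hasFDerivAt.clm_apply (hasFDerivAt_const (eE m i) x)
    rw [h.fderiv]
    simp

lemma integral_div_zero (m : ℕ) (g : E m → ℝ) (hg : ContDiff ℝ (⊤:ℕ∞) g)
    (hgpos : ∀ x, 0 < g x) (hgper : ∀ (x : E m) (k : Fin m → ℤ), g (x + latt m k) = g x) :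
    ∫ x in cube m, (‖gradient g x‖^2 / g x + (Real.log (g x) + 1) * lapE m g x) = 0 := by
  have hgd : Differentiable ℝ g := hg.differentiable (by simp)
  cases m with
  | zero =>
    have hz : ∀ x : E 0, ‖gradient g x‖^2 / g x + (Real.log (g x) + 1) * lapE 0 g x = 0 := by
      intro x
      have h1 : gradient g x = 0 := Subsingleton.elim _ _
      have h2 : lapE 0 g x = 0 := by simp [lapE]
      simp [h1, h2]
    simp [hz]
  | succ n =>
    have h := divergence_integral_zero n
      (fun i y => (Real.log (g y) + 1) * fderiv ℝ g y (eE (n+1) i))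
      (fun i => ((hg.log fun y => (hgpos y).ne').add contDiff_const).mul
        ((hg.fderiv_right (m := (⊤:ℕ∞)) (mod_cast le_top)).clm_apply contDiff_const))
      (fun i x k => by
        rw [hgper, fderiv_add_period g hgd _ (fun y => hgper y k)])
    rw [← h]
    exact setIntegral_congr_fun (measurableSet_cube _)
      fun x _ => (div_pointwise _ g hg hgpos x).symm

lemma continuous_lapE (m : ℕ) (g : E m → ℝ) (hg : ContDiff ℝ (⊤:ℕ∞) g) :
    Continuous (lapE m g) := by
  have h2 : Continuous (fderiv ℝ (fderiv ℝ g)) :=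
    (((hg.fderiv_right (m := (⊤:ℕ∞)) (mod_cast le_top))).fderiv_right (m := (⊤:ℕ∞))
      (mod_cast le_top)).continuous
  have heq : lapE m g = fun x => ∑ i, fderiv ℝ (fderiv ℝ g) x (eE m i) (eE m i) := by
    funext x
    unfold lapE D2E
    refine Finset.sum_congr rfl fun i _ => ?_
    rw [iteratedFDeriv_two_apply]
    simp
  rw [heq]
  exact continuous_finset_sum _ fun i _ =>
    (h2.clm_apply continuous_const).clm_apply continuous_const

lemma continuous_gradient (m : ℕ) (g : E m → ℝ) (hg : ContDiff ℝ (⊤:ℕ∞) g) :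
    Continuous (gradient g) := by
  have h : Continuous (fderiv ℝ g) := hg.continuous_fderiv (by simp)
  exact (InnerProductSpace.toDual ℝ (E m)).symm.continuous.comp h

/-- for a positive periodic solution of the heat equation, the entropy
`N(t) = ∫ u ln u` satisfies `N'(t) = −E(t)` where `E(t) = ∫ |∇f|² u`, `f = −ln u`. -/
theorem entropy_deriv (m : ℕ) (u : ℝ → E m → ℝ)
    (hu : ContDiff ℝ (⊤ : ℕ∞) (Function.uncurry u)) (hpos : ∀ t x, 0 < u t x)
    (hper : ∀ (t : ℝ) (x : E m) (k : Fin m → ℤ), u t (x + latt m k) = u t x)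
    (hheat : ∀ t x, deriv (fun s => u s x) t = lapE m (u t) x)
    (f : ℝ → E m → ℝ) (hf : f = fun t x => -Real.log (u t x))
    (N Ent : ℝ → ℝ)
    (hN : N = fun t => ∫ x in cube m, u t x * Real.log (u t x))
    (hE : Ent = fun t => ∫ x in cube m, ‖gradient (f t) x‖ ^ 2 * u t x)
    (t : ℝ) :
    HasDerivAt N (-Ent t) t := by
  have hsm : ∀ s, ContDiff ℝ (⊤:ℕ∞) (u s) := contDiff_sect hu
  have hsd : ∀ s, Differentiable ℝ (u s) := fun s => (hsm s).differentiable (by simp)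
  set F' : ℝ → E m → ℝ := fun s x => D1 u s x * (Real.log (u s x) + 1) with hF'
  -- continuity of F' jointly
  have hF'cont : Continuous fun p : ℝ × E m => F' p.1 p.2 := by
    refine (continuous_D1 hu).mul (Continuous.add ?_ continuous_const)
    exact hu.continuous.log fun p => (hpos p.1 p.2).ne'
  -- derivative under the integral sign
  obtain ⟨C, hC⟩ := ((isCompact_closedBall t 1).prod (isCompact_cube m)).exists_bound_of_continuousOn
    hF'cont.continuousOn
  have main := hasDerivAt_integral_of_dominated_loc_of_deriv_le (μ := volume.restrict (cube m))
    (F := fun s x => u s x * Real.log (u s x)) (F' := F') (bound := fun _ => C)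
    (x₀ := t) (Metric.ball_mem_nhds t one_pos)
    (Filter.Eventually.of_forall fun s =>
      (((hsm s).continuous.mul ((hsm s).continuous.log fun x => (hpos s x).ne')).aestronglyMeasurable))
    (((((hsm t).continuous.mul ((hsm t).continuous.log fun x => (hpos t x).ne'))).continuousOn).integrableOn_compact
      (isCompact_cube m))
    (((hF'cont.comp (Continuous.prodMk_right t))).aestronglyMeasurable)
    (by
      filter_upwards [ae_restrict_mem (measurableSet_cube m)] with x hx
      intro s hs
      exact hC (s, x) ⟨Metric.ball_subset_closedBall hs, hx⟩)
    ((integrableOn_const (isCompact_cube m).measure_lt_top.ne))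
    (Filter.Eventually.of_forall fun x => by
      intro s _
      have h1 := hasDerivAt_sect hu s x
      have h2 := h1.mul (h1.log (hpos s x).ne')
      convert h2 using 1
      · rfl
      · rfl
      have hne := (hpos s x).ne'
      simp only [hF']
      field_simp)
  obtain ⟨-, hderiv⟩ := main
  -- identify the derivative value
  have hval : (∫ x in cube m, F' t x) = -Ent t := by
    set g := u t with hg
    have hgc : ContDiff ℝ (⊤:ℕ∞) g := hsm t
    have hzero := integral_div_zero m g hgc (hpos t) (hper t)
    have hIa : IntegrableOn (fun x => ‖gradient g x‖ ^ 2 / g x) (cube m) := by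
      refine (Continuous.continuousOn ?_).integrableOn_compact (isCompact_cube m)
      exact (((continuous_gradient m g hgc).norm.pow 2)).div hgc.continuous
        fun x => (hpos t x).ne'
    have hIb : IntegrableOn (fun x => (Real.log (g x) + 1) * lapE m g x) (cube m) := by
      refine (Continuous.continuousOn ?_).integrableOn_compact (isCompact_cube m)
      exact ((hgc.continuous.log fun x => (hpos t x).ne').add continuous_const).mul
        (continuous_lapE m g hgc)
    rw [MeasureTheory.integral_add hIa hIb] at hzero
    have hFb : ∀ x, F' t x = (Real.log (g x) + 1) * lapE m g x := by
      intro x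
      have : D1 u t x = lapE m g x := by
        rw [← (hasDerivAt_sect hu t x).deriv, hheat t x]
      show D1 u t x * (Real.log (u t x) + 1) = (Real.log (g x) + 1) * lapE m g x
      rw [this]
      ring
    have hEnt : Ent t = ∫ x in cube m, ‖gradient g x‖ ^ 2 / g x := by
      rw [hE]
      refine setIntegral_congr_fun (measurableSet_cube m) fun x _ => ?_
      have hgrad : gradient (f t) x = -(g x)⁻¹ • gradient g x := by
        rw [hf]
        exact gradient_neg_log g (hsd t) x (hpos t x).ne'
      rw [hgrad]
      rw [norm_smul]
      have hne := (hpos t x).ne'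
      have hnn := (hpos t x).le
      rw [mul_pow]
      rw [div_eq_mul_inv]
      simp [hg, abs_of_nonneg (inv_nonneg.2 hnn), abs_of_nonneg hnn, sq]
      field_simp
    rw [show (fun x => F' t x) = fun x => (Real.log (g x) + 1) * lapE m g x from funext hFb]
    rw [hEnt]
    linarith
  rw [hN]
  exact hval ▸ hderiv
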